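/- Let L be a GNS-symmetric Lindblad generator with respect to a full-rank state σ, with Lindblad operators {A_j}_{j∈J} and Bohr frequencies ω_j, and let L_* be its trace adjoint, L_*(ρ) = Σ_j e^{−ω_j/2}(A_j*A_jρ − A_jρA_j*) + e^{ω_j/2}(ρA_jA_j* − A_j*ρA_j). The following are equivalent: (i) L is primitive with respect to σ (L_*(ρ)=0 implies ρ=σ for density matrices ρ); (ii) the commutant of {A_j : j∈J} equals ℂ·Id; (iii) L_0 = Σ_j L_{A_j} is ergodic, i.e. L_0(X)=0 implies X = λ·Id for some scalar λ. -/

import Mathlib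

noncomputable section

open Matrix MeasureTheory
open scoped Kronecker ComplexOrder

attribute [local instance] Matrix.frobeniusNormedAddCommGroup Matrix.frobeniusNormedSpace
attribute [local instance] Classical.propDecidable

/-- Logarithm of a Hermitian matrix via the spectral functional calculus
(junk value `0` on non-Hermitian matrices). -/
def mlog {n : Type*} [Fintype n] [DecidableEq n] (A : Matrix n n ℂ) : Matrix n n ℂ :=
  if h : A.IsHermitian then h.cfc Real.log else 0

/-- Square root of a positive semidefinite matrix (junk value `0` otherwise). -/
def msqrt {n : Type*} [Fintype n] [DecidableEq n] (A : Matrix n n ℂ) : Matrix n n ℂ :=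
  if h : A.PosSemidef then
    h.1.eigenvectorUnitary.1 * diagonal ((↑) ∘ Real.sqrt ∘ h.1.eigenvalues) *
      (star h.1.eigenvectorUnitary : Matrix n n ℂ) else 0

/-- Real power of a Hermitian matrix via the spectral functional calculus. -/
def mpow {n : Type*} [Fintype n] [DecidableEq n] (A : Matrix n n ℂ) (p : ℝ) : Matrix n n ℂ :=
  if h : A.IsHermitian then h.cfc (fun x => Real.rpow x p) else 0

/-- The map `Γ_σ(X) = σ^{1/2} X σ^{1/2}`. -/
def Gam {n : Type*} [Fintype n] [DecidableEq n] (σ X : Matrix n n ℂ) : Matrix n n ℂ :=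
  msqrt σ * X * msqrt σ

/-- A density matrix: positive semidefinite with unit trace. -/
def IsDensity {n : Type*} [Fintype n] (ρ : Matrix n n ℂ) : Prop :=
  ρ.PosSemidef ∧ ρ.trace = 1

/-- Quantum relative entropy `D(ρ‖σ) = tr(ρ(ln ρ − ln σ))`. -/
def relEnt {n : Type*} [Fintype n] [DecidableEq n] (ρ σ : Matrix n n ℂ) : ℝ :=
  ((ρ * (mlog ρ - mlog σ)).trace).re

/-- Lindblad's relative entropy for non-normalized positive operators:
`D_Lin(ρ‖σ) = tr(ρ(ln ρ − ln σ)) + tr σ − tr ρ`. -/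
def DLin {n : Type*} [Fintype n] [DecidableEq n] (ρ σ : Matrix n n ℂ) : ℝ :=
  ((ρ * (mlog ρ - mlog σ)).trace).re + (σ.trace).re - (ρ.trace).re

/-- GKLS generator (Heisenberg picture) of a detailed-balance quantum Markov semigroup:
`L(X) = −Σ_j (e^{−ω_j/2} A_j^*[X,A_j] + e^{ω_j/2}[A_j,X]A_j^*)`. -/
def lindbladGen {n : Type*} [Fintype n] {J : Type*} [Fintype J]
    (A : J → Matrix n n ℂ) (ω : J → ℝ) (X : Matrix n n ℂ) : Matrix n n ℂ :=
  -∑ j, ((Real.exp (-ω j / 2) : ℂ) • ((A j)ᴴ * (X * A j - A j * X)) +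
         (Real.exp (ω j / 2) : ℂ) • ((A j * X - X * A j) * (A j)ᴴ))

/-- Trace adjoint (Schrödinger picture generator):
`L_*(ρ) = Σ_j e^{−ω_j/2}(A_j^*A_jρ − A_jρA_j^*) + e^{ω_j/2}(ρA_jA_j^* − A_j^*ρA_j)`. -/
def lindbladStar {n : Type*} [Fintype n] {J : Type*} [Fintype J]
    (A : J → Matrix n n ℂ) (ω : J → ℝ) (ρ : Matrix n n ℂ) : Matrix n n ℂ :=
  ∑ j, ((Real.exp (-ω j / 2) : ℂ) • ((A j)ᴴ * A j * ρ - A j * ρ * (A j)ᴴ) +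
        (Real.exp (ω j / 2) : ℂ) • (ρ * (A j * (A j)ᴴ) - (A j)ᴴ * ρ * A j))

/-- Entropy production `EP_L(ρ) = tr(L_*(ρ)(ln ρ − ln σ))` (extended to
non-normalized positive `ρ`), where `σ` is the reference (invariant) state. -/
def EP {n : Type*} [Fintype n] [DecidableEq n] {J : Type*} [Fintype J]
    (A : J → Matrix n n ℂ) (ω : J → ℝ) (σ ρ : Matrix n n ℂ) : ℝ :=
  ((lindbladStar A ω ρ * (mlog ρ - mlog σ)).trace).re

/-- Modified logarithmic Sobolev constant of a primitive semigroup with invariant state `σ`: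
the largest `α` with `α D(ρ‖σ) ≤ EP_L(ρ)` for all densities `ρ`. -/
def mlsiConst {n : Type*} [Fintype n] [DecidableEq n] {J : Type*} [Fintype J]
    (A : J → Matrix n n ℂ) (ω : J → ℝ) (σ : Matrix n n ℂ) : ℝ :=
  sSup {α : ℝ | ∀ ρ : Matrix n n ℂ, IsDensity ρ → α * relEnt ρ σ ≤ EP A ω σ ρ}

/-- Partial trace over the first tensor factor. -/
def ptraceFst {n m : Type*} [Fintype n] (ρ : Matrix (n × m) (n × m) ℂ) : Matrix m m ℂ :=
  Matrix.of fun a b => ∑ i, ρ (i, a) (i, b)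

/-- Partial trace over the second tensor factor. -/
def ptraceSnd {n m : Type*} [Fintype m] (ρ : Matrix (n × m) (n × m) ℂ) : Matrix n n ℂ :=
  Matrix.of fun i j => ∑ a, ρ (i, a) (j, a)

/-- Complete modified logarithmic Sobolev constant (primitive case): the largest `α` with
`α D(ρ‖(E_*⊗id_R)(ρ)) ≤ EP_{L⊗id_R}(ρ)` for every finite-dimensional reference system `R`
and every density `ρ` on `H ⊗ H_R`; here `(E_*⊗id_R)(ρ) = σ ⊗ tr_H ρ`. -/
def clsiConst {n : Type*} [Fintype n] [DecidableEq n] {J : Type*} [Fintype J]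
    (A : J → Matrix n n ℂ) (ω : J → ℝ) (σ : Matrix n n ℂ) : ℝ :=
  sSup {α : ℝ | ∀ (r : ℕ) (ρ : Matrix (n × Fin r) (n × Fin r) ℂ), IsDensity ρ →
    α * relEnt ρ (σ ⊗ₖ ptraceFst ρ) ≤
      EP (fun j => A j ⊗ₖ (1 : Matrix (Fin r) (Fin r) ℂ)) ω (σ ⊗ₖ ptraceFst ρ) ρ}

/-- `Φ ⊗ id` of a superoperator `Φ`, acting on matrices over a product index set. -/
def tensorIdFun {n m : Type*} (Φ : Matrix n n ℂ → Matrix n n ℂ)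
    (ρ : Matrix (n × m) (n × m) ℂ) : Matrix (n × m) (n × m) ℂ :=
  Matrix.of fun p q => Φ (Matrix.of fun i j => ρ (i, p.2) (j, q.2)) p.1 q.1

/-- Double operator integral `[ρ]_ω^{-1} = ∫_0^∞ (r + e^{−ω/2}L_ρ)^{−1}(r + e^{ω/2}R_ρ)^{−1} dr`
applied to `X`. -/
def doiInv {n : Type*} [Fintype n] [DecidableEq n] (ρ : Matrix n n ℂ) (ω : ℝ)
    (X : Matrix n n ℂ) : Matrix n n ℂ :=
  ∫ r in Set.Ioi (0 : ℝ),
    ((r : ℂ) • (1 : Matrix n n ℂ) + (Real.exp (-ω / 2) : ℂ) • ρ)⁻¹ * X *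
      ((r : ℂ) • (1 : Matrix n n ℂ) + (Real.exp (ω / 2) : ℂ) • ρ)⁻¹

/-- Operator (spectral) norm `‖X‖_∞` of a matrix. -/
def opN {n : Type*} [Fintype n] [DecidableEq n] (X : Matrix n n ℂ) : ℝ :=
  ‖Matrix.toEuclideanCLM (𝕜 := ℂ) X‖


set_option linter.unusedSectionVars false
set_option maxHeartbeats 1000000

namespace ErgAux

variable {n : Type*} [Fintype n] [DecidableEq n]

lemma trace_ctm (M : Matrix n n ℂ) :
    (Mᴴ * M).trace = ((∑ j, ∑ i, Complex.normSq (M i j) : ℝ) : ℂ) := by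
  push_cast
  simp only [Matrix.trace, Matrix.diag, Matrix.mul_apply, Matrix.conjTranspose_apply]
  refine Finset.sum_congr rfl fun j _ => Finset.sum_congr rfl fun i _ => ?_
  rw [Complex.star_def, ← Complex.normSq_eq_conj_mul_self]

lemma eq_zero_of_trace_ctm {M : Matrix n n ℂ} (h : (Mᴴ * M).trace = 0) : M = 0 := by
  rw [trace_ctm, Complex.ofReal_eq_zero] at h
  have h' := (Finset.sum_eq_zero_iff_of_nonneg (fun j _ => Finset.sum_nonneg
    (fun i _ => Complex.normSq_nonneg _))).mp h
  ext i j
  have := (Finset.sum_eq_zero_iff_of_nonneg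
    (fun i _ => Complex.normSq_nonneg (M i j))).mp (h' j (Finset.mem_univ j)) i (Finset.mem_univ i)
  simpa [Complex.normSq_eq_zero] using this

lemma conj_cancel {S M N : Matrix n n ℂ} (h : IsUnit S.det) (hMN : S * M * S = S * N * S) :
    M = N := by
  have h1 := congrArg (fun Z => S⁻¹ * Z * S⁻¹) hMN
  simpa [Matrix.mul_assoc, Matrix.nonsing_inv_mul_cancel_left _ _ h,
    Matrix.mul_nonsing_inv _ h, ← Matrix.mul_assoc, Matrix.mul_nonsing_inv_cancel_right _ _ h]
    using h1

lemma swapL {S A : Matrix n n ℂ} {c : ℂ} (h : A * S = c • (S * A)) (M : Matrix n n ℂ) :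
    A * (S * M) = c • (S * (A * M)) := by
  rw [← mul_assoc, h, smul_mul_assoc, mul_assoc]

open scoped MatrixOrder in
lemma psd_sqrt {M : Matrix n n ℂ} (hM : M.PosSemidef) :
    ∃ S : Matrix n n ℂ, S * S = M ∧ S.PosSemidef :=
  ⟨CFC.sqrt M, CFC.sqrt_mul_sqrt_self M hM.nonneg, (CFC.sqrt_nonneg M).posSemidef⟩

lemma psd_trace {M : Matrix n n ℂ} (hM : M.PosSemidef) :
    ∃ r : ℝ, 0 ≤ r ∧ M.trace = (r : ℂ) ∧ (r = 0 → M = 0) := by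
  obtain ⟨B, rfl⟩ : ∃ B : Matrix n n ℂ, M = Bᴴ * B := by
    obtain ⟨S, hS, hSp⟩ := psd_sqrt hM
    exact ⟨S, by rw [hSp.isHermitian.eq, hS]⟩
  refine ⟨∑ j, ∑ i, Complex.normSq (B i j), ?_, trace_ctm B, fun hr => ?_⟩
  · exact Finset.sum_nonneg fun j _ => Finset.sum_nonneg fun i _ => Complex.normSq_nonneg _
  · have : (Bᴴ * B).trace = 0 := by rw [trace_ctm, hr, Complex.ofReal_zero]
    rw [eq_zero_of_trace_ctm this]; simp

lemma psd_smul {M : Matrix n n ℂ} (hM : M.PosSemidef) {a : ℝ} (ha : 0 ≤ a) :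
    ((a : ℂ) • M).PosSemidef := by
  constructor
  · have := hM.isHermitian
    unfold Matrix.IsHermitian at *
    simp [Matrix.conjTranspose_smul, this]
  · exact (hM.smul (Complex.zero_le_real.mpr ha)).2

lemma half_modular {S T A : Matrix n n ℂ} (hTT : T * T = S) (hTh : Tᴴ = T)
    (hTdet : IsUnit T.det) {c : ℝ} (hc : 0 < c)
    (hmod : S * S * A = ((c * c : ℝ) : ℂ) • (A * (S * S))) :
    S * A = (c : ℂ) • (A * S) := by
  have hSh : Sᴴ = S := by rw [← hTT, conjTranspose_mul, hTh]
  set B := S * A - (c : ℂ) • (A * S) with hB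
  have h0 : S * B + (c : ℂ) • (B * S) = 0 := by
    rw [hB, mul_sub, sub_mul, smul_sub, mul_smul_comm, smul_mul_assoc, smul_smul]
    rw [← mul_assoc, mul_assoc A S S, ← Complex.ofReal_mul, hmod]
    simp only [mul_assoc]
    abel
  have hkey : S * B = -((c : ℂ) • (B * S)) := eq_neg_of_add_eq_zero_left h0
  have e1 : ((T * B * T)ᴴ * (T * B * T)).trace = -(c : ℂ) * ((B * S)ᴴ * (B * S)).trace := by
    have e2 : (T * B * T)ᴴ * (T * B * T) = T * (Bᴴ * (S * (B * T))) := by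
      rw [conjTranspose_mul, conjTranspose_mul, hTh, ← hTT]
      simp only [mul_assoc]
    rw [e2, Matrix.trace_mul_comm]
    have e3 : Bᴴ * (S * (B * T)) * T = Bᴴ * ((S * B) * (T * T)) := by
      simp only [mul_assoc]
    rw [e3, hkey, hTT]
    have e4 : (B * S)ᴴ * (B * S) = S * (Bᴴ * (B * S)) := by
      rw [conjTranspose_mul, hSh]; simp only [mul_assoc]
    rw [e4, Matrix.trace_mul_comm S]
    simp only [mul_neg, smul_mul_assoc, mul_smul_comm, trace_neg, trace_smul, smul_eq_mul,
      neg_mul, mul_assoc]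
  rw [trace_ctm, trace_ctm] at e1
  set r2 := (∑ j, ∑ i, Complex.normSq ((T * B * T) i j) : ℝ) with hr2
  set r1 := (∑ j, ∑ i, Complex.normSq ((B * S) i j) : ℝ) with hr1
  have hr1n : 0 ≤ r1 := Finset.sum_nonneg fun j _ => Finset.sum_nonneg fun i _ =>
    Complex.normSq_nonneg _
  have hr2n : 0 ≤ r2 := Finset.sum_nonneg fun j _ => Finset.sum_nonneg fun i _ =>
    Complex.normSq_nonneg _
  have he : r2 = -c * r1 := by
    have := congrArg Complex.re e1
    simpa using this
  have hr2z : r2 = 0 := le_antisymm (by nlinarith) hr2n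
  have hTBT : T * B * T = 0 := by
    apply eq_zero_of_trace_ctm
    rw [trace_ctm, ← hr2, hr2z, Complex.ofReal_zero]
  have hBz : B = 0 := by
    apply conj_cancel hTdet
    rw [hTBT]; simp
  exact sub_eq_zero.mp (hB ▸ hBz)

lemma starj_eq {S A X : Matrix n n ℂ} {c c' : ℂ} (hcc : c * c' = 1)
    (r1 : S * A = c • (A * S)) (r2 : A * S = c' • (S * A))
    (r3 : S * Aᴴ = c' • (Aᴴ * S)) (r4 : Aᴴ * S = c • (S * Aᴴ)) :
    c • (Aᴴ * A * (S * X * S) - A * (S * X * S) * Aᴴ) +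
      c' • ((S * X * S) * (A * Aᴴ) - Aᴴ * (S * X * S) * A) =
    S * (-(c • (Aᴴ * (X * A - A * X)) + c' • ((A * X - X * A) * Aᴴ))) * S := by
  have hc'c : c' * c = 1 := by rw [mul_comm]; exact hcc
  have ha : Aᴴ * A * (S * X * S) = S * (Aᴴ * (A * X)) * S := by
    calc Aᴴ * A * (S * X * S) = Aᴴ * (A * (S * (X * S))) := by simp only [mul_assoc]
    _ = Aᴴ * (c' • (S * (A * (X * S)))) := by rw [swapL r2]
    _ = c' • (Aᴴ * (S * (A * (X * S)))) := by rw [mul_smul_comm]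
    _ = c' • (c • (S * (Aᴴ * (A * (X * S))))) := by rw [swapL r4]
    _ = (c' * c) • (S * (Aᴴ * (A * (X * S)))) := by rw [smul_smul]
    _ = S * (Aᴴ * (A * X)) * S := by rw [hc'c, one_smul]; simp only [mul_assoc]
  have hb : c • (A * (S * X * S) * Aᴴ) = c' • (S * (A * (X * Aᴴ)) * S) := by
    calc c • (A * (S * X * S) * Aᴴ) = c • (A * (S * (X * (S * Aᴴ)))) := by simp only [mul_assoc]
    _ = c • (A * (S * (X * (c' • (Aᴴ * S))))) := by rw [r3]
    _ = (c * c') • (A * (S * (X * (Aᴴ * S)))) := by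
        simp only [mul_smul_comm, smul_smul]
    _ = A * (S * (X * (Aᴴ * S))) := by rw [hcc, one_smul]
    _ = c' • (S * (A * (X * (Aᴴ * S)))) := by rw [swapL r2]
    _ = c' • (S * (A * (X * Aᴴ)) * S) := by simp only [mul_assoc]
  have hc2 : (S * X * S) * (A * Aᴴ) = S * (X * (A * Aᴴ)) * S := by
    calc (S * X * S) * (A * Aᴴ) = S * (X * (S * (A * Aᴴ))) := by simp only [mul_assoc]
    _ = S * (X * (c • (A * (S * Aᴴ)))) := by rw [swapL r1]
    _ = S * (X * (c • (A * (c' • (Aᴴ * S))))) := by rw [r3]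
    _ = (c * c') • (S * (X * (A * (Aᴴ * S)))) := by
        simp only [mul_smul_comm, smul_smul]
    _ = S * (X * (A * Aᴴ)) * S := by rw [hcc, one_smul]; simp only [mul_assoc]
  have hd : c' • (Aᴴ * (S * X * S) * A) = c • (S * (Aᴴ * (X * A)) * S) := by
    calc c' • (Aᴴ * (S * X * S) * A) = c' • (Aᴴ * (S * (X * (S * A)))) := by
          simp only [mul_assoc]
    _ = c' • (Aᴴ * (S * (X * (c • (A * S))))) := by rw [r1]
    _ = (c' * c) • (Aᴴ * (S * (X * (A * S)))) := by
        simp only [mul_smul_comm, smul_smul]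
    _ = Aᴴ * (S * (X * (A * S))) := by rw [hc'c, one_smul]
    _ = c • (S * (Aᴴ * (X * (A * S)))) := by rw [swapL r4]
    _ = c • (S * (Aᴴ * (X * A)) * S) := by simp only [mul_assoc]
  have expand : S * (-(c • (Aᴴ * (X * A - A * X)) + c' • ((A * X - X * A) * Aᴴ))) * S =
      c • (S * (Aᴴ * (A * X)) * S) - c • (S * (Aᴴ * (X * A)) * S)
        + (c' • (S * (X * (A * Aᴴ)) * S) - c' • (S * (A * (X * Aᴴ)) * S)) := by
    simp only [mul_sub, sub_mul, smul_sub, neg_add, neg_sub, mul_neg, mul_add, add_mul,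
      mul_smul_comm, smul_mul_assoc, mul_assoc]
  rw [expand, smul_sub, smul_sub, ← ha, ← hb, ← hc2, ← hd]
  abel

lemma quadj_eq {S A X : Matrix n n ℂ} {c c' : ℂ} (hcc : c * c' = 1) (hX : Xᴴ = X)
    (r3 : S * Aᴴ = c' • (Aᴴ * S)) (r4 : Aᴴ * S = c • (S * Aᴴ)) :
    ((S * X * S) * (c • (Aᴴ * (A * X - X * A)) - c' • ((A * X - X * A) * Aᴴ))).trace =
      (S * (A * X - X * A)ᴴ * (S * (A * X - X * A))).trace := by
  have hc'c : c' * c = 1 := by rw [mul_comm]; exact hcc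
  set C := A * X - X * A with hC
  have hCH : Cᴴ = X * Aᴴ - Aᴴ * X := by
    rw [hC, conjTranspose_sub, conjTranspose_mul, conjTranspose_mul, hX]
  have t1 : ((S * X * S) * (Aᴴ * C)).trace = c' * (S * (X * (Aᴴ * (S * C)))).trace := by
    have : (S * X * S) * (Aᴴ * C) = S * (X * (S * (Aᴴ * C))) := by simp only [mul_assoc]
    rw [this, swapL r3]
    simp only [mul_smul_comm, trace_smul, smul_eq_mul]
  have t2 : ((S * X * S) * (C * Aᴴ)).trace = c * (S * (Aᴴ * (X * (S * C)))).trace := by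
    rw [show (S * X * S) * (C * Aᴴ) = (S * (X * (S * C))) * Aᴴ by simp only [mul_assoc],
      Matrix.trace_mul_comm, swapL r4, trace_smul, smul_eq_mul]
  have hs1 : c * (c' * (S * (X * (Aᴴ * (S * C)))).trace) =
      (S * (X * (Aᴴ * (S * C)))).trace := by rw [← mul_assoc, hcc, one_mul]
  have hs2 : c' * (c * (S * (Aᴴ * (X * (S * C)))).trace) =
      (S * (Aᴴ * (X * (S * C)))).trace := by rw [← mul_assoc, hc'c, one_mul]
  have hsplit : S * Cᴴ * (S * C) = S * (X * (Aᴴ * (S * C))) - S * (Aᴴ * (X * (S * C))) := by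
    rw [hCH, mul_sub, sub_mul]; simp only [mul_assoc]
  rw [mul_sub, mul_smul_comm, mul_smul_comm, trace_sub, trace_smul, trace_smul,
    smul_eq_mul, smul_eq_mul, t1, t2, hs1, hs2, hsplit, trace_sub]

lemma pos_term {S T C : Matrix n n ℂ} (hTT : T * T = S) (hTh : Tᴴ = T) :
    (S * Cᴴ * (S * C)).trace = ((T * C * T)ᴴ * (T * C * T)).trace := by
  have e0 : (T * C * T)ᴴ * (T * C * T) = T * (Cᴴ * (S * (C * T))) := by
    rw [conjTranspose_mul, conjTranspose_mul, hTh, ← hTT]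
    simp only [mul_assoc]
  have e1 : ((T * C * T)ᴴ * (T * C * T)).trace = (Cᴴ * (S * (C * (T * T)))).trace := by
    rw [e0, Matrix.trace_mul_comm T]
    simp only [mul_assoc]
  rw [e1, hTT]
  have e2 : S * Cᴴ * (S * C) = S * (Cᴴ * (S * C)) := by simp only [mul_assoc]
  rw [e2, Matrix.trace_mul_comm S]
  simp only [mul_assoc]

lemma quad0 {A X : Matrix n n ℂ} :
    (Xᴴ * (Aᴴ * (A * X - X * A) - (A * X - X * A) * Aᴴ)).trace =
      ((A * X - X * A)ᴴ * (A * X - X * A)).trace := by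
  set C := A * X - X * A with hC
  have hCH : Cᴴ = Xᴴ * Aᴴ - Aᴴ * Xᴴ := by
    rw [hC, conjTranspose_sub, conjTranspose_mul, conjTranspose_mul]
  have e1 : Cᴴ * C = Xᴴ * (Aᴴ * C) - Aᴴ * (Xᴴ * C) := by
    rw [hCH, sub_mul]; simp only [mul_assoc]
  have e2 : (Xᴴ * (C * Aᴴ)).trace = (Aᴴ * (Xᴴ * C)).trace := by
    rw [show Xᴴ * (C * Aᴴ) = (Xᴴ * C) * Aᴴ by simp only [mul_assoc], Matrix.trace_mul_comm]
  rw [mul_sub, trace_sub, e1, trace_sub, e2]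

lemma herm_shift_psd {Y : Matrix n n ℂ} (hY : Y.IsHermitian) :
    ∃ β : ℝ, (Y + (β : ℂ) • 1).PosSemidef := by
  set β : ℝ := 1 + ∑ i, |hY.eigenvalues i| with hβ
  refine ⟨β, ?_⟩
  set U : Matrix n n ℂ := (hY.eigenvectorUnitary : Matrix n n ℂ) with hU
  have hUU : U * star U = 1 := (Matrix.mem_unitaryGroup_iff).mp hY.eigenvectorUnitary.2
  have key : Y + (β : ℂ) • 1 =
      U * diagonal (fun i => ((hY.eigenvalues i + β : ℝ) : ℂ)) * Uᴴ := by
    have hsp := hY.spectral_theorem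
    rw [Unitary.conjStarAlgAut_apply, ← hU] at hsp
    rw [← Matrix.star_eq_conjTranspose]
    calc Y + (β : ℂ) • 1
        = U * diagonal (RCLike.ofReal ∘ hY.eigenvalues) * star U + (β : ℂ) • (U * star U) := by
          rw [← hsp, hUU]
    _ = U * (diagonal (RCLike.ofReal ∘ hY.eigenvalues) + (β : ℂ) • 1) * star U := by
          simp only [mul_add, add_mul, mul_smul_comm, smul_mul_assoc, mul_one]
    _ = U * diagonal (fun i => ((hY.eigenvalues i + β : ℝ) : ℂ)) * star U := by
          rw [Matrix.smul_one_eq_diagonal, diagonal_add]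
          congr 1
          funext i
          simp [Complex.ofReal_add]
  rw [key]
  refine Matrix.PosSemidef.mul_mul_conjTranspose_same ?_ U
  refine Matrix.PosSemidef.diagonal ?_
  intro i
  refine Complex.zero_le_real.mpr ?_
  have h1 : |hY.eigenvalues i| ≤ ∑ k, |hY.eigenvalues k| :=
    Finset.single_le_sum (f := fun k => |hY.eigenvalues k|) (fun k _ => abs_nonneg _)
      (Finset.mem_univ i)
  have h2 : -|hY.eigenvalues i| ≤ hY.eigenvalues i := neg_abs_le _
  rw [hβ]; linarith


end ErgAux

/-- **Characterization of primitivity (Lemma `ergodic`).** For a GNS-symmetric Lindblad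
generator `L` with respect to a full-rank state `σ`, with Lindblad operators `{A_j}` and
Bohr frequencies `ω_j`, the following are equivalent:
(i) `L` is primitive with respect to `σ` (`L_*(ρ) = 0` implies `ρ = σ` for densities);
(ii) the commutant of `{A_j : j ∈ J}` is `ℂ·Id`;
(iii) `L_0 = Σ_j L_{A_j}` is ergodic (`L_0(X) = 0` implies `X = λ·Id`). -/
theorem primitivity_tfae {d : ℕ} {J : Type} [Fintype J]
    (A : J → Matrix (Fin d) (Fin d) ℂ) (ω : J → ℝ)
    (σ : Matrix (Fin d) (Fin d) ℂ) (hσ : σ.PosDef) (hσtr : σ.trace = 1)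
    (hsa : Set.range (fun j => (A j)ᴴ) = Set.range A)
    (hmod : ∀ j, σ * A j = (Real.exp (-ω j) : ℂ) • (A j * σ))
    (hinv : lindbladStar A ω σ = 0) :
    List.TFAE [
      (∀ ρ : Matrix (Fin d) (Fin d) ℂ, IsDensity ρ → lindbladStar A ω ρ = 0 → ρ = σ),
      (∀ X : Matrix (Fin d) (Fin d) ℂ, (∀ j, A j * X = X * A j) →
        ∃ c : ℂ, X = c • (1 : Matrix (Fin d) (Fin d) ℂ)),
      (∀ X : Matrix (Fin d) (Fin d) ℂ, lindbladGen A (fun _ => 0) X = 0 →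
        ∃ c : ℂ, X = c • (1 : Matrix (Fin d) (Fin d) ℂ))] := by
  classical
  have hσps : σ.PosSemidef := hσ.posSemidef
  obtain ⟨S, hSS, hSps⟩ := ErgAux.psd_sqrt hσps
  have hSh : Sᴴ = S := hSps.isHermitian
  obtain ⟨T, hTT, hTps⟩ := ErgAux.psd_sqrt hSps
  have hTh : Tᴴ = T := hTps.isHermitian
  have hσdet : IsUnit σ.det := isUnit_iff_ne_zero.mpr (ne_of_gt hσ.det_pos)
  have hSdet : IsUnit S.det := by
    have hd : S.det * S.det = σ.det := by rw [← Matrix.det_mul, hSS]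
    exact isUnit_of_mul_isUnit_left (hd ▸ hσdet)
  have hTdet : IsUnit T.det := by
    have hd : T.det * T.det = S.det := by rw [← Matrix.det_mul, hTT]
    exact isUnit_of_mul_isUnit_left (hd ▸ hSdet)
  set cA : J → ℂ := fun j => (Real.exp (-ω j / 2) : ℂ) with hcA
  set cB : J → ℂ := fun j => (Real.exp (ω j / 2) : ℂ) with hcB
  have hcc : ∀ j, cA j * cB j = 1 := by
    intro j
    rw [hcA, hcB, ← Complex.ofReal_mul, ← Real.exp_add]
    have h0 : -ω j / 2 + ω j / 2 = 0 := by ring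
    rw [h0, Real.exp_zero, Complex.ofReal_one]
  have R1 : ∀ j, S * A j = cA j • (A j * S) := by
    intro j
    refine ErgAux.half_modular hTT hTh hTdet (Real.exp_pos _) ?_
    have hexp : Real.exp (-ω j / 2) * Real.exp (-ω j / 2) = Real.exp (-ω j) := by
      rw [← Real.exp_add]; ring_nf
    rw [hSS, hexp]
    exact hmod j
  have R2 : ∀ j, A j * S = cB j • (S * A j) := by
    intro j
    rw [R1 j, smul_smul, mul_comm (cB j) (cA j), hcc j, one_smul]
  have R3 : ∀ j, S * (A j)ᴴ = cB j • ((A j)ᴴ * S) := by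
    intro j
    have h := congrArg conjTranspose (R2 j)
    rw [conjTranspose_mul, conjTranspose_smul, conjTranspose_mul, hSh] at h
    have hstar : star (cB j) = cB j := by
      rw [hcB, Complex.star_def, Complex.conj_ofReal]
    rwa [hstar] at h
  have R4 : ∀ j, (A j)ᴴ * S = cA j • (S * (A j)ᴴ) := by
    intro j
    rw [R3 j, smul_smul, hcc j, one_smul]
  -- intertwining: L_*(S X S) = S L(X) S
  have hGam : ∀ X : Matrix (Fin d) (Fin d) ℂ,
      lindbladStar A ω (S * X * S) = S * lindbladGen A ω X * S := by
    intro X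
    unfold lindbladStar lindbladGen
    calc ∑ j, (cA j • ((A j)ᴴ * A j * (S * X * S) - A j * (S * X * S) * (A j)ᴴ) +
          cB j • ((S * X * S) * (A j * (A j)ᴴ) - (A j)ᴴ * (S * X * S) * A j))
        = ∑ j, S * (-(cA j • ((A j)ᴴ * (X * A j - A j * X)) +
            cB j • ((A j * X - X * A j) * (A j)ᴴ))) * S := by
          refine Finset.sum_congr rfl fun j _ => ?_
          have := ErgAux.starj_eq (hcc j) (R1 j) (R2 j) (R3 j) (R4 j) (X := X)
          simpa [mul_assoc] using this
    _ = S * (-∑ j, (cA j • ((A j)ᴴ * (X * A j - A j * X)) +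
            cB j • ((A j * X - X * A j) * (A j)ᴴ))) * S := by
          rw [← Finset.sum_neg_distrib, Finset.mul_sum, Finset.sum_mul]
  -- quadratic form
  have hQuad : ∀ X : Matrix (Fin d) (Fin d) ℂ, Xᴴ = X →
      ((S * X * S) * lindbladGen A ω X).trace =
        ∑ j, (S * (A j * X - X * A j)ᴴ * (S * (A j * X - X * A j))).trace := by
    intro X hX
    unfold lindbladGen
    have hneg : ∀ j : J, -(cA j • ((A j)ᴴ * (X * A j - A j * X)) +
        cB j • ((A j * X - X * A j) * (A j)ᴴ)) =
        cA j • ((A j)ᴴ * (A j * X - X * A j)) - cB j • ((A j * X - X * A j) * (A j)ᴴ) := by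
      intro j
      rw [neg_add, ← smul_neg, ← mul_neg, neg_sub, sub_eq_add_neg]
      abel
    calc ((S * X * S) * (-∑ j, (cA j • ((A j)ᴴ * (X * A j - A j * X)) +
            cB j • ((A j * X - X * A j) * (A j)ᴴ)))).trace
        = ∑ j, ((S * X * S) * (cA j • ((A j)ᴴ * (A j * X - X * A j)) -
            cB j • ((A j * X - X * A j) * (A j)ᴴ))).trace := by
          rw [← Finset.sum_neg_distrib, Finset.mul_sum, trace_sum]
          exact Finset.sum_congr rfl fun j _ => by rw [hneg j]
    _ = ∑ j, (S * (A j * X - X * A j)ᴴ * (S * (A j * X - X * A j))).trace := by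
          refine Finset.sum_congr rfl fun j _ => ?_
          exact ErgAux.quadj_eq (hcc j) hX (R3 j) (R4 j)
  -- a Hermitian matrix commuting with everything is scalar, assuming (1)
  -- the sum of the quadratic form terms vanishing implies all commutators vanish
  have hvanish : ∀ X : Matrix (Fin d) (Fin d) ℂ,
      (∑ j, (S * (A j * X - X * A j)ᴴ * (S * (A j * X - X * A j))).trace) = 0 →
      ∀ j, A j * X = X * A j := by
    intro X hsum j
    have hterm : ∀ k : J, (S * (A k * X - X * A k)ᴴ * (S * (A k * X - X * A k))).trace =
        ((∑ p, ∑ q, Complex.normSq ((T * (A k * X - X * A k) * T) q p) : ℝ) : ℂ) := by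
      intro k
      rw [ErgAux.pos_term hTT hTh, ErgAux.trace_ctm]
    have hsum' : (∑ k, ∑ p, ∑ q,
        Complex.normSq ((T * (A k * X - X * A k) * T) q p) : ℝ) = 0 := by
      have : ((∑ k, ∑ p, ∑ q,
          Complex.normSq ((T * (A k * X - X * A k) * T) q p) : ℝ) : ℂ) = 0 := by
        push_cast
        rw [← hsum]
        exact (Finset.sum_congr rfl fun k _ => by rw [hterm k]; push_cast; ring).symm
      exact_mod_cast this
    have hk0 : (∑ p, ∑ q, Complex.normSq ((T * (A j * X - X * A j) * T) q p) : ℝ) = 0 :=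
      (Finset.sum_eq_zero_iff_of_nonneg (fun k _ => Finset.sum_nonneg fun p _ =>
        Finset.sum_nonneg fun q _ => Complex.normSq_nonneg _)).mp hsum' j (Finset.mem_univ j)
    have hTCT : T * (A j * X - X * A j) * T = 0 := by
      apply ErgAux.eq_zero_of_trace_ctm
      rw [ErgAux.trace_ctm, hk0, Complex.ofReal_zero]
    have hC : A j * X - X * A j = 0 := by
      apply ErgAux.conj_cancel hTdet
      rw [hTCT]; simp
    exact sub_eq_zero.mp hC
  -- linearity of lindbladStar in scalars
  have hstar_smul : ∀ (e : ℂ) (M : Matrix (Fin d) (Fin d) ℂ),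
      lindbladStar A ω (e • M) = e • lindbladStar A ω M := by
    intro e M
    unfold lindbladStar
    rw [Finset.smul_sum]
    refine Finset.sum_congr rfl fun j _ => ?_
    simp only [mul_smul_comm, smul_mul_assoc, smul_sub, smul_add, smul_smul]
    ring_nf
  -- (1) → (2)
  have imp12 : (∀ ρ : Matrix (Fin d) (Fin d) ℂ, IsDensity ρ → lindbladStar A ω ρ = 0 → ρ = σ) →
      (∀ X : Matrix (Fin d) (Fin d) ℂ, (∀ j, A j * X = X * A j) →
        ∃ c : ℂ, X = c • (1 : Matrix (Fin d) (Fin d) ℂ)) := by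
    intro h1 X hX
    have hXH : ∀ j, (A j)ᴴ * X = X * (A j)ᴴ := by
      intro j
      have hmem : (A j)ᴴ ∈ Set.range A := by rw [← hsa]; exact ⟨j, rfl⟩
      obtain ⟨k, hk⟩ := hmem
      rw [← hk]; exact hX k
    have key : ∀ Y : Matrix (Fin d) (Fin d) ℂ, Yᴴ = Y → (∀ j, A j * Y = Y * A j) →
        (∀ j, (A j)ᴴ * Y = Y * (A j)ᴴ) → ∃ r : ℂ, Y = r • 1 := by
      intro Y hYh hYc hYcH
      obtain ⟨β, hPpsd⟩ := ErgAux.herm_shift_psd (show Y.IsHermitian from hYh)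
      set P : Matrix (Fin d) (Fin d) ℂ := Y + (β : ℂ) • 1 with hP
      have hPc : ∀ j, A j * P = P * A j := by
        intro j
        rw [hP, mul_add, add_mul, hYc j, mul_smul_comm, smul_mul_assoc, mul_one, one_mul]
      have hPcH : ∀ j, (A j)ᴴ * P = P * (A j)ᴴ := by
        intro j
        rw [hP, mul_add, add_mul, hYcH j, mul_smul_comm, smul_mul_assoc, mul_one, one_mul]
      have hLP : lindbladGen A ω P = 0 := by
        unfold lindbladGen
        rw [Finset.sum_eq_zero, neg_zero]
        intro j _
        rw [sub_eq_zero_of_eq (hPc j).symm, sub_eq_zero_of_eq (hPc j), mul_zero, zero_mul,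
          smul_zero, smul_zero, add_zero]
      have hMpsd : (S * P * S).PosSemidef := by
        have h := hPpsd.mul_mul_conjTranspose_same S
        rwa [hSh] at h
      obtain ⟨r, hr0, hrtr, hrz⟩ := ErgAux.psd_trace hMpsd
      by_cases hr : r = 0
      · have hM0 : S * P * S = 0 := hrz hr
        have hP0 : P = 0 := ErgAux.conj_cancel hSdet (by rw [hM0]; simp)
        refine ⟨-(β : ℂ), ?_⟩
        have := eq_neg_of_add_eq_zero_left (hP ▸ hP0)
        rw [this, neg_smul]
      · have hrpos : 0 < r := lt_of_le_of_ne hr0 (Ne.symm hr)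
        set ρ : Matrix (Fin d) (Fin d) ℂ := ((r : ℂ))⁻¹ • (S * P * S) with hρdef
        have hρd : IsDensity ρ := by
          constructor
          · have h := ErgAux.psd_smul hMpsd (le_of_lt (inv_pos.mpr hrpos))
            rwa [Complex.ofReal_inv] at h
          · rw [hρdef, trace_smul, hrtr, smul_eq_mul, inv_mul_cancel₀
              (Complex.ofReal_ne_zero.mpr hr)]
        have hρ0 : lindbladStar A ω ρ = 0 := by
          rw [hρdef, hstar_smul, hGam P, hLP, mul_zero, zero_mul, smul_zero]
        have hρσ : ρ = σ := h1 ρ hρd hρ0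
        have hM : S * P * S = (r : ℂ) • σ := by
          have h2 : (r : ℂ) • ρ = (r : ℂ) • σ := by rw [hρσ]
          rwa [hρdef, smul_smul, mul_inv_cancel₀ (Complex.ofReal_ne_zero.mpr hr),
            one_smul] at h2
        have hPr : P = (r : ℂ) • 1 := by
          apply ErgAux.conj_cancel hSdet
          rw [hM, ← hSS, mul_smul_comm, smul_mul_assoc, mul_one]
        refine ⟨(r : ℂ) - (β : ℂ), ?_⟩
        rw [sub_smul, ← hPr, hP]
        abel
    set H : Matrix (Fin d) (Fin d) ℂ := X + Xᴴ with hHdef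
    set K : Matrix (Fin d) (Fin d) ℂ := Complex.I • (X - Xᴴ) with hKdef
    have hHh : Hᴴ = H := by rw [hHdef, conjTranspose_add, conjTranspose_conjTranspose, add_comm]
    have hKh : Kᴴ = K := by
      rw [hKdef, conjTranspose_smul, conjTranspose_sub, conjTranspose_conjTranspose]
      simp only [Complex.star_def, Complex.conj_I, neg_smul, smul_sub, neg_sub]
      abel
    have hHc : ∀ j, A j * H = H * A j := by
      intro j
      have hXHc : ∀ k, A k * Xᴴ = Xᴴ * A k := by
        intro k
        have := congrArg conjTranspose (hXH k)
        rw [conjTranspose_mul, conjTranspose_mul, conjTranspose_conjTranspose] at this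
        exact this.symm
      rw [hHdef, mul_add, add_mul, hX j, hXHc j]
    have hXHc : ∀ k, A k * Xᴴ = Xᴴ * A k := by
      intro k
      have := congrArg conjTranspose (hXH k)
      rw [conjTranspose_mul, conjTranspose_mul, conjTranspose_conjTranspose] at this
      exact this.symm
    have hKc : ∀ j, A j * K = K * A j := by
      intro j
      rw [hKdef, mul_smul_comm, smul_mul_assoc, mul_sub, sub_mul, hX j, hXHc j]
    have hHcH : ∀ j, (A j)ᴴ * H = H * (A j)ᴴ := by
      intro j
      have h := congrArg conjTranspose (hHc j)
      rw [conjTranspose_mul, conjTranspose_mul, hHh] at h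
      exact h.symm
    have hKcH : ∀ j, (A j)ᴴ * K = K * (A j)ᴴ := by
      intro j
      have h := congrArg conjTranspose (hKc j)
      rw [conjTranspose_mul, conjTranspose_mul, hKh] at h
      exact h.symm
    obtain ⟨a, ha⟩ := key H hHh hHc hHcH
    obtain ⟨b, hb⟩ := key K hKh hKc hKcH
    refine ⟨(a - Complex.I * b) / 2, ?_⟩
    have h2X : H - Complex.I • K = (2 : ℂ) • X := by
      rw [hHdef, hKdef, smul_smul, Complex.I_mul_I, neg_smul, one_smul, sub_neg_eq_add, two_smul]
      abel
    have hval : (2 : ℂ) • X = (a - Complex.I * b) • 1 := by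
      rw [← h2X, ha, hb, smul_smul, sub_smul]
    calc X = (2 : ℂ)⁻¹ • ((2 : ℂ) • X) := by rw [smul_smul]; norm_num
    _ = (2 : ℂ)⁻¹ • ((a - Complex.I * b) • 1) := by rw [hval]
    _ = ((a - Complex.I * b) / 2) • 1 := by rw [smul_smul]; congr 1; ring
  -- (2) → (1)
  have imp21 : (∀ X : Matrix (Fin d) (Fin d) ℂ, (∀ j, A j * X = X * A j) →
        ∃ c : ℂ, X = c • (1 : Matrix (Fin d) (Fin d) ℂ)) →
      (∀ ρ : Matrix (Fin d) (Fin d) ℂ, IsDensity ρ → lindbladStar A ω ρ = 0 → ρ = σ) := by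
    intro h2 ρ hρd hρ0
    set X : Matrix (Fin d) (Fin d) ℂ := S⁻¹ * ρ * S⁻¹ with hXdef
    have hρeq : S * X * S = ρ := by
      rw [hXdef]
      simp only [Matrix.mul_assoc]
      rw [Matrix.nonsing_inv_mul _ hSdet, Matrix.mul_one,
        Matrix.mul_nonsing_inv_cancel_left _ _ hSdet]
    have hXh : Xᴴ = X := by
      have hρh : ρᴴ = ρ := hρd.1.isHermitian
      have hSih : (S⁻¹)ᴴ = S⁻¹ := by rw [Matrix.conjTranspose_nonsing_inv, hSh]
      rw [hXdef, conjTranspose_mul, conjTranspose_mul, hρh, hSih]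
      simp only [Matrix.mul_assoc]
    have hLX : lindbladGen A ω X = 0 := by
      apply ErgAux.conj_cancel hSdet
      rw [← hGam X, hρeq, hρ0]
      simp
    have hsum : ∑ j, (S * (A j * X - X * A j)ᴴ * (S * (A j * X - X * A j))).trace = 0 := by
      rw [← hQuad X hXh, hLX, mul_zero, trace_zero]
    have hcomm : ∀ j, A j * X = X * A j := hvanish X hsum
    obtain ⟨e, he⟩ := h2 X hcomm
    have hρe : ρ = e • σ := by
      rw [← hρeq, he, mul_smul_comm, smul_mul_assoc, mul_one, hSS]
    have he1 : e = 1 := by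
      have htr := hρd.2
      rwa [hρe, trace_smul, hσtr, smul_eq_mul, mul_one] at htr
    rw [hρe, he1, one_smul]
  -- (2) → (3)
  have imp23 : (∀ X : Matrix (Fin d) (Fin d) ℂ, (∀ j, A j * X = X * A j) →
        ∃ c : ℂ, X = c • (1 : Matrix (Fin d) (Fin d) ℂ)) →
      (∀ X : Matrix (Fin d) (Fin d) ℂ, lindbladGen A (fun _ => 0) X = 0 →
        ∃ c : ℂ, X = c • (1 : Matrix (Fin d) (Fin d) ℂ)) := by
    intro h2 X hX0
    have hsimp : lindbladGen A (fun _ => 0) X =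
        -∑ j, ((A j)ᴴ * (X * A j - A j * X) + (A j * X - X * A j) * (A j)ᴴ) := by
      unfold lindbladGen
      congr 1
      refine Finset.sum_congr rfl fun j _ => ?_
      norm_num
    have hsum0 : ∑ j, ((A j)ᴴ * (X * A j - A j * X) + (A j * X - X * A j) * (A j)ᴴ) = 0 :=
      neg_eq_zero.mp (hsimp ▸ hX0)
    have hkey : ∑ j, ((A j * X - X * A j)ᴴ * (A j * X - X * A j)).trace = 0 := by
      have e1 : ∀ j : J, ((A j * X - X * A j)ᴴ * (A j * X - X * A j)).trace =
          (Xᴴ * ((A j)ᴴ * (A j * X - X * A j) - (A j * X - X * A j) * (A j)ᴴ)).trace :=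
        fun j => (ErgAux.quad0).symm
      have e2 : ∀ j : J, (A j)ᴴ * (A j * X - X * A j) - (A j * X - X * A j) * (A j)ᴴ =
          -((A j)ᴴ * (X * A j - A j * X) + (A j * X - X * A j) * (A j)ᴴ) := by
        intro j
        rw [neg_add, ← mul_neg, neg_sub, sub_eq_add_neg]
      calc ∑ j, ((A j * X - X * A j)ᴴ * (A j * X - X * A j)).trace
          = ∑ j, (Xᴴ * (-((A j)ᴴ * (X * A j - A j * X) + (A j * X - X * A j) * (A j)ᴴ))).trace := by
            refine Finset.sum_congr rfl fun j _ => ?_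
            rw [e1 j, e2 j]
      _ = (Xᴴ * (-∑ j, ((A j)ᴴ * (X * A j - A j * X) + (A j * X - X * A j) * (A j)ᴴ))).trace := by
            rw [← Finset.sum_neg_distrib, Finset.mul_sum, trace_sum]
      _ = 0 := by rw [hsum0, neg_zero, mul_zero, trace_zero]
    -- conclude each commutator is zero
    have hcomm : ∀ j, A j * X = X * A j := by
      intro j
      have hterm : ∀ k : J, ((A k * X - X * A k)ᴴ * (A k * X - X * A k)).trace =
          ((∑ p, ∑ q, Complex.normSq ((A k * X - X * A k) q p) : ℝ) : ℂ) :=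
        fun k => ErgAux.trace_ctm _
      have hsum2 : (∑ k, ∑ p, ∑ q, Complex.normSq ((A k * X - X * A k) q p) : ℝ) = 0 := by
        have : ((∑ k, ∑ p, ∑ q, Complex.normSq ((A k * X - X * A k) q p) : ℝ) : ℂ) = 0 := by
          push_cast
          rw [← hkey]
          exact (Finset.sum_congr rfl fun k _ => by rw [hterm k]; push_cast; ring).symm
        exact_mod_cast this
      have hk0 : (∑ p, ∑ q, Complex.normSq ((A j * X - X * A j) q p) : ℝ) = 0 :=
        (Finset.sum_eq_zero_iff_of_nonneg (fun k _ => Finset.sum_nonneg fun p _ =>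
          Finset.sum_nonneg fun q _ => Complex.normSq_nonneg _)).mp hsum2 j (Finset.mem_univ j)
      have hC : A j * X - X * A j = 0 := by
        apply ErgAux.eq_zero_of_trace_ctm
        rw [ErgAux.trace_ctm, hk0, Complex.ofReal_zero]
      exact sub_eq_zero.mp hC
    exact h2 X hcomm
  -- (3) → (2)
  have imp32 : (∀ X : Matrix (Fin d) (Fin d) ℂ, lindbladGen A (fun _ => 0) X = 0 →
        ∃ c : ℂ, X = c • (1 : Matrix (Fin d) (Fin d) ℂ)) →
      (∀ X : Matrix (Fin d) (Fin d) ℂ, (∀ j, A j * X = X * A j) →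
        ∃ c : ℂ, X = c • (1 : Matrix (Fin d) (Fin d) ℂ)) := by
    intro h3 X hX
    apply h3
    unfold lindbladGen
    rw [Finset.sum_eq_zero, neg_zero]
    intro j _
    rw [sub_eq_zero_of_eq (hX j).symm, sub_eq_zero_of_eq (hX j), mul_zero, zero_mul,
      smul_zero, smul_zero, add_zero]
  tfae_have 1 → 2 := imp12
  tfae_have 2 → 1 := imp21
  tfae_have 2 → 3 := imp23
  tfae_have 3 → 2 := imp32
  tfae_finish
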